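/- Let W be standard Brownian motion with natural filtration (F_t), let K > 0, and let Y be a left-continuous adapted process with ‖Y‖²_K := ∫_0^K E[Y(t)²] dt < ∞. For b > 0 let Y^b be Y truncated to [−b, b], and for m ≥ 0 let Y^b_m(t) := Y^b(0)·1_{{0}}(t) + Σ_{r≥1} Y^b(s_m(r−1)) 1_{(s_m(r−1), s_m(r)]}(t), with s_m the Skorohod stopping times of step 2^{−m}. Then there exists a sequence m(b) → ∞ such that ‖Y − Y^b_{m(b)}‖_K → 0 as b → ∞. -/

import Mathlib

open scoped Classical ENNReal NNReal
open MeasureTheory ProbabilityTheory Filter Set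

noncomputable section

/-- `W` is a standard Brownian motion on `(Ω, P)`: starts at `0`, has continuous
paths, Gaussian increments `W_t - W_s ~ N(0, t-s)`, and independent increments. -/
def IsStandardBM {Ω : Type} [MeasurableSpace Ω] (P : Measure Ω) (W : ℝ → Ω → ℝ) : Prop :=
  (∀ t : ℝ, StronglyMeasurable (W t)) ∧
  (∀ ω, W 0 ω = 0) ∧
  (∀ ω, Continuous fun t => W t ω) ∧
  (∀ s t : ℝ, 0 ≤ s → s ≤ t →
    P.map (fun ω => W t ω - W s ω) = gaussianReal 0 (Real.toNNReal (t - s))) ∧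
  (∀ n : ℕ, ∀ u : ℕ → ℝ, Monotone u → u 0 = 0 → (∀ i, 0 ≤ u i) →
    iIndepFun
      (fun (i : Fin n) ω => W (u (i + 1)) ω - W (u i) ω) P)

/-- Pathwise Skorohod stopping times with step `2^{-m}`:
`s_m(0)=0`, `s_m(k+1) = inf{s > s_m(k) : |W(s) - W(s_m(k))| = 2^{-m}}`. -/
def skTime (Wp : ℝ → ℝ) (m : ℕ) : ℕ → ℝ
  | 0 => 0
  | k + 1 => sInf {s : ℝ | skTime Wp m k < s ∧
      |Wp s - Wp (skTime Wp m k)| = (2 : ℝ) ^ (-(m : ℤ))}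

/-- The Skorohod-embedded walk `B_m`, with `B_m(k 2^{-2m}) = W(s_m(k))`, extended
to real `t ≥ 0` by linear interpolation. -/
def embWalk (Wp : ℝ → ℝ) (m : ℕ) (t : ℝ) : ℝ :=
  (1 - (t * 2 ^ (2 * m) - (⌊t * 2 ^ (2 * m)⌋₊ : ℝ))) * Wp (skTime Wp m ⌊t * 2 ^ (2 * m)⌋₊) +
    (t * 2 ^ (2 * m) - (⌊t * 2 ^ (2 * m)⌋₊ : ℝ)) * Wp (skTime Wp m (⌊t * 2 ^ (2 * m)⌋₊ + 1))

/-- Pathwise Itô sum `(f(W)·W)^m_t`. -/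
def itoSum (Wp : ℝ → ℝ) (f : ℝ → ℝ) (m : ℕ) (t : ℝ) : ℝ :=
  ∑ r ∈ Finset.range ⌊t * 2 ^ (2 * m)⌋₊,
    f (Wp (skTime Wp m r)) * (Wp (skTime Wp m (r + 1)) - Wp (skTime Wp m r))

/-- Pathwise Stratonovich sum `(f(W)∘W)^m_t`. -/
def stratSum (Wp : ℝ → ℝ) (f : ℝ → ℝ) (m : ℕ) (t : ℝ) : ℝ :=
  ∑ r ∈ Finset.range ⌊t * 2 ^ (2 * m)⌋₊,
    (f (Wp (skTime Wp m r)) + f (Wp (skTime Wp m (r + 1)))) / 2 *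
      (Wp (skTime Wp m (r + 1)) - Wp (skTime Wp m r))

/-- Truncation of `y` to the interval `[-b, b]`. -/
def trunc (b y : ℝ) : ℝ := max (-b) (min b y)

/-- The simple process obtained by sampling a path `Yp` at the Skorohod stopping
times of the Brownian path `Wp`:
`Y^b_m(t) = Y^b(0) 1_{{0}}(t) + Σ_{r≥1} Y^b(s_m(r-1)) 1_{(s_m(r-1), s_m(r)]}(t)`. -/
def sampled (Wp Yp : ℝ → ℝ) (m : ℕ) (t : ℝ) : ℝ :=
  if t = 0 then Yp 0
  else ∑' r : ℕ,
    Set.indicator (Set.Ioc (skTime Wp m r) (skTime Wp m (r + 1)))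
      (fun _ => Yp (skTime Wp m r)) t

/-- Left continuity of a process. -/
def LeftContinuousPaths {Ω : Type} (Y : ℝ → Ω → ℝ) : Prop :=
  ∀ ω, ∀ t : ℝ, Tendsto (fun s => Y s ω) (nhdsWithin t (Set.Iio t)) (nhds (Y t ω))


/-- Robust dominated convergence for (possibly non-measurable) lower Lebesgue integrals. -/
lemma lemmaM {α : Type*} [MeasurableSpace α] (μ : Measure α) (f : ℕ → α → ℝ≥0∞) (D : α → ℝ≥0∞)
    (hD : ∫⁻ a, D a ∂μ ≠ ∞)
    (hdom : ∀ n, ∀ᵐ a ∂μ, f n a ≤ D a)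
    (hconv : ∀ᵐ a ∂μ, D a ≠ ∞ → Tendsto (fun n => f n a) atTop (nhds 0)) :
    Tendsto (fun n => ∫⁻ a, f n a ∂μ) atTop (nhds 0) := by
  have hφ : ∀ n, ∃ g : α → ℝ≥0∞, Measurable g ∧ g ≤ f n ∧ ∫⁻ a, f n a ∂μ = ∫⁻ a, g a ∂μ :=
    fun n => exists_measurable_le_lintegral_eq μ (f n)
  choose φ hφm hφle hφeq using hφ
  set B : α → ℝ≥0∞ := fun a => ⨆ n, φ n a with hB
  have hBmeas : Measurable B := Measurable.iSup hφm
  have hBD : B ≤ᵐ[μ] D := by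
    filter_upwards [ae_all_iff.2 hdom] with a ha
    exact iSup_le fun n => (hφle n a).trans (ha n)
  have hBint : ∫⁻ a, B a ∂μ ≠ ∞ := (lt_of_le_of_lt (lintegral_mono_ae hBD) hD.lt_top).ne
  -- a.e. convergence of φ to 0
  have hφ0 : ∀ᵐ a ∂μ, Tendsto (fun n => φ n a) atTop (nhds 0) := by
    set N := toMeasurable μ {a | ¬ (D a ≠ ∞ → Tendsto (fun n => f n a) atTop (nhds 0))} with hN
    have hNmeas : MeasurableSet N := measurableSet_toMeasurable _ _
    have hNnull : μ N = 0 := by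
      rw [hN, measure_toMeasurable, ← ae_iff]; exact hconv
    set S := {a | ¬ Tendsto (fun n => φ n a) atTop (nhds 0)} with hS
    have hSmeas : MeasurableSet S := (measurableSet_tendsto (nhds 0) hφm).compl
    have hsub : S \ N ⊆ {a | D a = ∞} := by
      rintro a ⟨haS, haN⟩
      by_contra hDa
      have hfa : Tendsto (fun n => f n a) atTop (nhds 0) := by
        by_contra h
        refine haN (subset_toMeasurable _ _ ?_)
        simp only [mem_setOf_eq, Classical.not_imp]
        exact ⟨hDa, h⟩
      refine haS (tendsto_of_tendsto_of_tendsto_of_le_of_le (g := fun _ => (0:ℝ≥0∞))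
        (h := fun n => f n a) tendsto_const_nhds hfa (fun n => zero_le) (fun n => hφle n a))
    have hSN : μ (S \ N) = 0 := by
      by_contra h
      have hge : (∞ : ℝ≥0∞) * μ (S \ N) ≤ ∫⁻ a, D a ∂μ := by
        rw [← lintegral_indicator_const (hSmeas.diff hNmeas)]
        refine lintegral_mono fun a => ?_
        by_cases ha : a ∈ S \ N
        · rw [indicator_of_mem ha]; exact le_of_eq (hsub ha).symm
        · simp [indicator_of_notMem ha]
      rw [ENNReal.top_mul h] at hge
      exact hD (top_le_iff.mp hge)
    have hSnull : μ S = 0 := by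
      have : S ⊆ N ∪ (S \ N) := by
        intro a ha
        by_cases h : a ∈ N
        · exact Or.inl h
        · exact Or.inr ⟨ha, h⟩
      refine measure_mono_null this ?_
      refine le_antisymm ((measure_union_le _ _).trans ?_) zero_le
      simp [hNnull, hSN]
    have : ∀ᵐ a ∂μ, a ∉ S := (ae_iff (p := fun a => a ∉ S)).mpr (by simpa [hS] using hSnull)
    filter_upwards [this] with a ha
    simpa [hS, not_not] using ha
  have hlim := tendsto_lintegral_of_dominated_convergence (μ := μ) (f := fun _ => (0:ℝ≥0∞)) B hφm
    (fun n => Filter.Eventually.of_forall (fun a => le_iSup (fun k => φ k a) n)) hBint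
    (hφ0.mono fun a h => h)
  simp only [lintegral_zero] at hlim
  exact (tendsto_congr fun n => hφeq n).2 hlim


lemma seq_approx_left (t : ℝ) :
    Tendsto (fun n : ℕ => ((⌈t * (n+1)⌉ : ℝ) - 1)/(n+1)) atTop (nhdsWithin t (Iio t)) := by
  have hlt : ∀ n : ℕ, ((⌈t * (n+1)⌉ : ℝ) - 1)/(n+1) < t := by
    intro n
    rw [div_lt_iff₀ (by positivity)]
    have := Int.ceil_lt_add_one (t * (n+1))
    linarith
  have hge : ∀ n : ℕ, t - 1/(n+1) ≤ ((⌈t * (n+1)⌉ : ℝ) - 1)/(n+1) := by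
    intro n
    rw [le_div_iff₀ (by positivity)]
    have := Int.le_ceil (t * (n+1))
    have hpos : (0:ℝ) < n + 1 := by positivity
    field_simp
    linarith
  have htends : Tendsto (fun n : ℕ => ((⌈t * (n+1)⌉ : ℝ) - 1)/(n+1)) atTop (nhds t) := by
    refine tendsto_of_tendsto_of_tendsto_of_le_of_le (g := fun n : ℕ => t - 1/(n+1))
      (h := fun _ : ℕ => t) ?_ tendsto_const_nhds hge (fun n => (hlt n).le)
    have : Tendsto (fun n : ℕ => 1/((n:ℝ)+1)) atTop (nhds 0) := tendsto_one_div_add_atTop_nhds_zero_nat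
    simpa using tendsto_const_nhds.sub this
  exact tendsto_nhdsWithin_of_tendsto_nhds_of_eventually_within _ htends
    (Eventually.of_forall fun n => hlt n)

lemma jointMeasurable_of_leftContinuous {Ω : Type} [MeasurableSpace Ω] (Y : ℝ → Ω → ℝ)
    (hm : ∀ t, Measurable (Y t))
    (hl : ∀ ω t, Tendsto (fun s => Y s ω) (nhdsWithin t (Iio t)) (nhds (Y t ω))) :
    Measurable fun p : ℝ × Ω => Y p.1 p.2 := by
  have key : ∀ n : ℕ, Measurable fun p : ℝ × Ω =>
      Y (((⌈p.1 * ((n:ℝ)+1)⌉ : ℝ) - 1)/((n:ℝ)+1)) p.2 := by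
    intro n
    have hg : Measurable fun q : Ω × ℤ => Y (((q.2 : ℝ) - 1)/((n:ℝ)+1)) q.1 :=
      measurable_from_prod_countable_left (fun k => by simpa using hm (((k:ℝ) - 1)/((n:ℝ)+1)))
    have hc : Measurable fun p : ℝ × Ω => ((p.2, ⌈p.1 * ((n:ℝ)+1)⌉) : Ω × ℤ) :=
      measurable_snd.prodMk (Int.measurable_ceil.comp (measurable_fst.mul_const _))
    exact hg.comp hc
  refine measurable_of_tendsto_metrizable key ?_
  rw [tendsto_pi_nhds]
  intro p
  exact (hl p.2 p.1).comp (seq_approx_left p.1)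

section pathwise
variable {w : ℝ → ℝ}

/-- Hitting helper: first crossing of level `c` after `x`. -/
lemma hit_props (hw : Continuous w) (hUB : ∀ c : ℝ, ∃ q : ℝ, 0 ≤ q ∧ c < |w q|)
    {x c : ℝ} (hx : 0 ≤ x) (hc : 0 < c) :
    x < sInf {s | x < s ∧ |w s - w x| = c} ∧
    |w (sInf {s | x < s ∧ |w s - w x| = c}) - w x| = c ∧
    (∀ s, x < s → s < sInf {s | x < s ∧ |w s - w x| = c} → |w s - w x| < c) := by
  set S := {s | x < s ∧ |w s - w x| = c} with hS
  set g := fun s => |w s - w x| with hg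
  have hgc : Continuous g := (hw.sub continuous_const).abs
  -- nonempty
  have hSne : S.Nonempty := by
    obtain ⟨z, hz, hzmax⟩ := isCompact_Icc.exists_isMaxOn (Set.nonempty_Icc.2 hx)
      ((continuous_abs.comp hw).continuousOn : ContinuousOn (fun s => |w s|) (Icc 0 x))
    obtain ⟨q, hq0, hq⟩ := hUB (|w z| + c)
    have hqx : x < q := by
      by_contra h
      push_neg at h
      exact absurd (hzmax ⟨hq0, h⟩) (not_le.mpr (by show |w z| < |w q|; nlinarith))
    have hgq : c ≤ g q := by
      have : |w q| - |w x| ≤ |w q - w x| := by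
        have := abs_sub_abs_le_abs_sub (w q) (w x)
        linarith
      have hwx : |w x| ≤ |w z| := hzmax ⟨hx, le_rfl⟩
      simp only [hg]; nlinarith
    have : c ∈ g '' Icc x q := by
      have := intermediate_value_Icc hqx.le hgc.continuousOn
      refine this ?_
      constructor
      · simp [hg]; exact hc.le
      · exact hgq
    obtain ⟨s, hsmem, hsval⟩ := this
    refine ⟨s, ?_, hsval⟩
    rcases eq_or_lt_of_le hsmem.1 with h | h
    · exfalso; rw [← h] at hsval; simp [hg] at hsval; exact absurd hsval.symm hc.ne'
    · exact h
  have hSbdd : BddBelow S := ⟨x, fun s hs => hs.1.le⟩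
  -- positive distance below
  obtain ⟨δ, hδ, hδc⟩ := Metric.continuousAt_iff.1 hw.continuousAt c hc
  have hlb : ∀ s ∈ S, x + δ ≤ s := by
    intro s hs
    by_contra h
    push_neg at h
    have hd : dist s x < δ := by
      rw [Real.dist_eq, abs_of_pos (by linarith [hs.1] : (0:ℝ) < s - x)]
      linarith [hs.1]
    have := hδc hd
    rw [Real.dist_eq] at this
    exact absurd hs.2 (ne_of_lt this)
  have hτgt : x < sInf S := lt_of_lt_of_le (by linarith) (le_csInf hSne hlb)
  have hτval : |w (sInf S) - w x| = c := by
    obtain ⟨u, hu_anti, hu_tend, hu_mem⟩ := exists_seq_tendsto_sInf hSne hSbdd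
    have h1 : Tendsto (fun n => g (u n)) atTop (nhds (g (sInf S))) :=
      (hgc.continuousAt).tendsto.comp hu_tend
    have h2 : (fun n => g (u n)) = fun _ => c := funext fun n => (hu_mem n).2
    rw [h2] at h1
    exact (tendsto_nhds_unique tendsto_const_nhds h1).symm
  refine ⟨hτgt, hτval, ?_⟩
  intro s hxs hsτ
  by_contra h
  push_neg at h
  have : c ∈ g '' Icc x s := by
    refine intermediate_value_Icc hxs.le hgc.continuousOn ⟨?_, h⟩
    simp [hg]; exact hc.le
  obtain ⟨s', hs'mem, hs'val⟩ := this
  have hxs' : x < s' := by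
    rcases eq_or_lt_of_le hs'mem.1 with h' | h'
    · exfalso; rw [← h'] at hs'val; simp [hg] at hs'val; exact absurd hs'val.symm hc.ne'
    · exact h'
  have : sInf S ≤ s' := csInf_le hSbdd ⟨hxs', hs'val⟩
  linarith [hs'mem.2]

variable (hw : Continuous w) (hUB : ∀ c : ℝ, ∃ q : ℝ, 0 ≤ q ∧ c < |w q|) (m : ℕ)

lemma cm_pos : (0:ℝ) < (2:ℝ)^(-(m:ℤ)) := by positivity

lemma skTime_zero : skTime w m 0 = 0 := rfl

lemma skTime_succ (k : ℕ) : skTime w m (k+1) = sInf {s : ℝ | skTime w m k < s ∧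
    |w s - w (skTime w m k)| = (2 : ℝ) ^ (-(m : ℤ))} := rfl

include hw hUB

lemma skTime_props : ∀ k : ℕ, 0 ≤ skTime w m k ∧ skTime w m k < skTime w m (k+1) ∧
    |w (skTime w m (k+1)) - w (skTime w m k)| = (2:ℝ)^(-(m:ℤ)) ∧
    (∀ s, skTime w m k < s → s < skTime w m (k+1) →
      |w s - w (skTime w m k)| < (2:ℝ)^(-(m:ℤ))) := by
  intro k
  induction k with
  | zero =>
    have h := hit_props hw hUB (le_refl (0:ℝ)) (cm_pos m)
    rw [skTime_zero] at *
    exact ⟨le_rfl, h.1, h.2.1, h.2.2⟩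
  | succ k ih =>
    have h0 : (0:ℝ) ≤ skTime w m (k+1) := le_of_lt (lt_of_le_of_lt ih.1 ih.2.1)
    have h := hit_props hw hUB h0 (cm_pos m)
    exact ⟨h0, h.1, h.2.1, h.2.2⟩

lemma skTime_strictMono : StrictMono (skTime w m) :=
  strictMono_nat_of_lt_succ (fun k => (skTime_props hw hUB m k).2.1)

lemma skTime_tendsto : Tendsto (skTime w m) atTop atTop := by
  rcases tendsto_of_monotone (skTime_strictMono hw hUB m).monotone with h | ⟨l, hl⟩
  · exact h
  · exfalso
    have hwl : Tendsto (fun k => w (skTime w m k)) atTop (nhds (w l)) :=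
      (hw.continuousAt).tendsto.comp hl
    have hshift : Tendsto (fun k => w (skTime w m (k+1))) atTop (nhds (w l)) :=
      hwl.comp (tendsto_add_atTop_nat 1)
    have hdiff : Tendsto (fun k => |w (skTime w m (k+1)) - w (skTime w m k)|) atTop
        (nhds (|w l - w l|)) := ((hshift.sub hwl).abs)
    have heq : (fun k => |w (skTime w m (k+1)) - w (skTime w m k)|)
        = fun _ => (2:ℝ)^(-(m:ℤ)) := funext fun k => (skTime_props hw hUB m k).2.2.1
    rw [heq] at hdiff
    have h2 := tendsto_nhds_unique hdiff tendsto_const_nhds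
    rw [sub_self, abs_zero] at h2
    have := cm_pos m
    linarith

lemma skTime_locate {t : ℝ} (ht : 0 < t) : ∃ r : ℕ, skTime w m r < t ∧ t ≤ skTime w m (r+1) := by
  have hev : ∃ k, t ≤ skTime w m k := by
    have := (tendsto_atTop.1 (skTime_tendsto hw hUB m)) t
    exact this.exists
  classical
  let k0 := Nat.find hev
  have hk0 : t ≤ skTime w m k0 := Nat.find_spec hev
  have hk0ne : k0 ≠ 0 := by
    intro h
    rw [h, skTime_zero] at hk0
    linarith
  obtain ⟨r, hr⟩ := Nat.exists_eq_succ_of_ne_zero hk0ne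
  refine ⟨r, ?_, by rw [← Nat.succ_eq_add_one, ← hr]; exact hk0⟩
  have := Nat.find_min hev (m := r) (by omega)
  push_neg at this
  exact this

end pathwise

section pathwise2
variable {w : ℝ → ℝ}
variable (hw : Continuous w) (hUB : ∀ c : ℝ, ∃ q : ℝ, 0 ≤ q ∧ c < |w q|)
  (hNC : ∀ a b : ℝ, 0 ≤ a → a < b → ∃ s, a < s ∧ s < b ∧ w s ≠ w a)

include hw hUB hNC in
lemma skTime_left_approach {t : ℝ} (ht : 0 < t) (r : ℕ → ℕ)
    (hr : ∀ m, skTime w m (r m) < t ∧ t ≤ skTime w m (r m + 1)) :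
    Tendsto (fun m => skTime w m (r m)) atTop (nhdsWithin t (Iio t)) := by
  refine tendsto_nhdsWithin_of_tendsto_nhds_of_eventually_within _ ?_
    (Eventually.of_forall fun m => (hr m).1)
  rw [Metric.tendsto_atTop]
  intro δ hδ
  set a := max (t - δ/2) (t/2) with ha
  have ha0 : 0 ≤ a := le_trans (by linarith) (le_max_right _ _)
  have hat : a < t := max_lt (by linarith) (by linarith)
  obtain ⟨s, has, hst, hsne⟩ := hNC a t ha0 hat
  set ε := |w s - w a| with hε
  have hεpos : 0 < ε := abs_pos.2 (sub_ne_zero.2 hsne)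
  have hcm_to : Tendsto (fun m : ℕ => (2:ℝ)^(-(m:ℤ))) atTop (nhds 0) := by
    have heq : (fun m : ℕ => (2:ℝ)^(-(m:ℤ))) = fun m : ℕ => (1/2:ℝ)^m := by
      funext m
      rw [zpow_neg, zpow_natCast, one_div, inv_pow]
    rw [heq]
    exact tendsto_pow_atTop_nhds_zero_of_lt_one (by norm_num) (by norm_num)
  have hev : ∀ᶠ m : ℕ in atTop, (2:ℝ)^(-(m:ℤ)) < ε/2 :=
    hcm_to.eventually_lt_const (by linarith)
  obtain ⟨N, hN⟩ := eventually_atTop.1 hev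
  refine ⟨N, fun m hm => ?_⟩
  have hcm := hN m hm
  have hgt : a < skTime w m (r m) := by
    by_contra hle
    push_neg at hle
    have props := skTime_props hw hUB m (r m)
    have hb1 : |w s - w (skTime w m (r m))| < (2:ℝ)^(-(m:ℤ)) :=
      props.2.2.2 s (lt_of_le_of_lt hle has) (lt_of_lt_of_le hst (hr m).2)
    have hb2 : |w a - w (skTime w m (r m))| < (2:ℝ)^(-(m:ℤ)) := by
      rcases eq_or_lt_of_le hle with h | h
      · rw [h, sub_self, abs_zero]; exact cm_pos m
      · exact props.2.2.2 a h (lt_of_lt_of_le hat (hr m).2)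
    have htri : ε ≤ |w s - w (skTime w m (r m))| + |w a - w (skTime w m (r m))| := by
      have := abs_sub_le (w s) (w (skTime w m (r m))) (w a)
      rw [hε]
      calc |w s - w a| ≤ |w s - w (skTime w m (r m))| + |w (skTime w m (r m)) - w a| := this
        _ = |w s - w (skTime w m (r m))| + |w a - w (skTime w m (r m))| := by
            rw [abs_sub_comm (w (skTime w m (r m)))]
    linarith
  have hlt : skTime w m (r m) < t := (hr m).1
  rw [Real.dist_eq, abs_of_neg (by linarith)]
  have : t - a ≤ δ/2 := by
    have := le_max_left (t - δ/2) (t/2)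
    rw [ha] at *
    linarith [le_max_left (t - δ/2) (t/2)]
  linarith


include hw hUB in
lemma sampled_eq (Yp : ℝ → ℝ) {t : ℝ} (ht : 0 < t) {m r : ℕ}
    (hr1 : skTime w m r < t) (hr2 : t ≤ skTime w m (r+1)) :
    sampled w Yp m t = Yp (skTime w m r) := by
  rw [sampled, if_neg ht.ne']
  have hmono := (skTime_strictMono hw hUB m).monotone
  rw [tsum_eq_single r ?_]
  · exact indicator_of_mem (Set.mem_Ioc.2 ⟨hr1, hr2⟩) _
  · intro r' hne
    refine indicator_of_notMem (fun hmem => ?_) _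
    rcases lt_or_gt_of_ne hne with h | h
    · have : skTime w m (r'+1) ≤ skTime w m r := hmono (by omega)
      exact absurd hmem.2 (not_le.2 (lt_of_le_of_lt this hr1))
    · have : skTime w m (r+1) ≤ skTime w m r' := hmono (by omega)
      exact absurd hmem.1 (not_lt.2 (le_trans hr2 this))
end pathwise2


section prob
variable {Ω : Type} [MeasurableSpace Ω] (P : Measure Ω) [IsProbabilityMeasure P]
  (W : ℝ → Ω → ℝ) (hW : IsStandardBM P W)

include hW

lemma bm_increment_ne (q1 q2 : ℝ) (h0 : 0 ≤ q1) (h12 : q1 < q2) :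
    ∀ᵐ ω ∂P, W q2 ω ≠ W q1 ω := by
  have hmeas : Measurable fun ω => W q2 ω - W q1 ω :=
    ((hW.1 q2).measurable).sub ((hW.1 q1).measurable)
  have hmap := hW.2.2.2.1 q1 q2 h0 h12.le
  have hv : Real.toNNReal (q2 - q1) ≠ 0 := by
    simp only [ne_eq, Real.toNNReal_eq_zero, not_le]
    linarith
  have h0' : P {ω | W q2 ω - W q1 ω = 0} = 0 := by
    have : {ω | W q2 ω - W q1 ω = 0} = (fun ω => W q2 ω - W q1 ω) ⁻¹' {0} := rfl
    rw [this, ← Measure.map_apply hmeas (measurableSet_singleton 0), hmap]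
    exact (gaussianReal_absolutelyContinuous 0 hv) (measure_singleton 0)
  rw [ae_iff]
  convert h0' using 2
  ext ω
  simp [sub_eq_zero, not_not]

lemma bm_unbounded (k : ℕ) :
    ∀ᵐ ω ∂P, ∃ q : ℚ, 0 ≤ (q:ℝ) ∧ (k:ℝ) < |W q ω| := by
  rw [ae_iff]
  set Ac := {ω | ¬ ∃ q : ℚ, 0 ≤ (q:ℝ) ∧ (k:ℝ) < |W q ω|} with hAc
  have hbound : ∀ n : ℕ,
      P Ac ≤ ENNReal.ofReal ((Real.sqrt (2*Real.pi*((n:ℝ)+1)))⁻¹) * ENNReal.ofReal (2*k) := by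
    intro n
    set v := Real.toNNReal (((n:ℝ)+1) - 0) with hv
    have hvne : v ≠ 0 := by
      simp only [hv, sub_zero, ne_eq, Real.toNNReal_eq_zero, not_le]
      positivity
    have hmap := hW.2.2.2.1 0 ((n:ℝ)+1) le_rfl (by positivity)
    have hWn : (fun ω => W ((n:ℝ)+1) ω - W 0 ω) = W ((n:ℝ)+1) := by
      funext ω; rw [hW.2.1 ω, sub_zero]
    rw [hWn] at hmap
    have hsub : Ac ⊆ (W ((n:ℝ)+1)) ⁻¹' (Icc (-(k:ℝ)) k) := by
      intro ω hω
      rw [hAc, mem_setOf_eq] at hω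
      push_neg at hω
      have hq : ((((n:ℕ)+1 : ℚ)):ℝ) = (n:ℝ)+1 := by push_cast; ring
      have := hω ((n:ℕ)+1 : ℚ) (by rw [hq]; positivity)
      rw [hq] at this
      rw [mem_preimage, mem_Icc, ← abs_le]
      exact this
    have hIcc : P ((W ((n:ℝ)+1)) ⁻¹' (Icc (-(k:ℝ)) k))
        = gaussianReal 0 v (Icc (-(k:ℝ)) k) := by
      rw [← hmap, Measure.map_apply (hW.1 _).measurable measurableSet_Icc]
    have hpdf : ∀ x : ℝ, gaussianPDF 0 v x ≤ ENNReal.ofReal ((Real.sqrt (2*Real.pi*((n:ℝ)+1)))⁻¹) := by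
      intro x
      rw [gaussianPDF]
      apply ENNReal.ofReal_le_ofReal
      rw [gaussianPDFReal]
      have hvv : ((v:ℝ)) = (n:ℝ)+1 := by
        rw [hv]; rw [Real.coe_toNNReal _ (by have : (0:ℝ) ≤ (n:ℝ) := Nat.cast_nonneg n; linarith)]; ring
      rw [hvv]
      have hexp : Real.exp (-(x - 0)^2 / (2*((n:ℝ)+1))) ≤ 1 := by
        rw [Real.exp_le_one_iff]
        apply div_nonpos_of_nonpos_of_nonneg
        · simp [sq_nonneg]
        · positivity
      have hinv : (0:ℝ) ≤ (Real.sqrt (2*Real.pi*((n:ℝ)+1)))⁻¹ := by positivity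
      calc (Real.sqrt (2*Real.pi*((n:ℝ)+1)))⁻¹ * Real.exp (-(x - 0)^2 / (2*((n:ℝ)+1)))
          ≤ (Real.sqrt (2*Real.pi*((n:ℝ)+1)))⁻¹ * 1 := by
            apply mul_le_mul_of_nonneg_left hexp hinv
        _ = _ := mul_one _
    calc P Ac ≤ gaussianReal 0 v (Icc (-(k:ℝ)) k) := hIcc ▸ measure_mono hsub
      _ = ∫⁻ x in Icc (-(k:ℝ)) k, gaussianPDF 0 v x := gaussianReal_apply 0 hvne _
      _ ≤ ∫⁻ _ in Icc (-(k:ℝ)) k, ENNReal.ofReal ((Real.sqrt (2*Real.pi*((n:ℝ)+1)))⁻¹) :=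
          lintegral_mono fun x => hpdf x
      _ = ENNReal.ofReal ((Real.sqrt (2*Real.pi*((n:ℝ)+1)))⁻¹) * volume (Icc (-(k:ℝ)) k) :=
          setLIntegral_const _ _
      _ ≤ _ := by
          rw [Real.volume_Icc]
          apply mul_le_mul_right
          apply ENNReal.ofReal_le_ofReal
          ring_nf
          rfl
  have htend : Tendsto (fun n : ℕ =>
      ENNReal.ofReal ((Real.sqrt (2*Real.pi*((n:ℝ)+1)))⁻¹) * ENNReal.ofReal (2*k)) atTop (nhds 0) := by
    have h1 : Tendsto (fun n : ℕ => 2*Real.pi*((n:ℝ)+1)) atTop atTop := by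
      apply Tendsto.const_mul_atTop (by positivity)
      exact tendsto_atTop_add_const_right _ _ tendsto_natCast_atTop_atTop
    have hsq : Tendsto Real.sqrt atTop atTop := by
      apply tendsto_atTop_atTop_of_monotone' (fun a b hab => Real.sqrt_le_sqrt hab)
      rintro ⟨C, hC⟩
      have hmem : Real.sqrt ((max C 0 + 1)^2) ∈ range Real.sqrt := mem_range_self _
      have := hC hmem
      rw [Real.sqrt_sq (by positivity)] at this
      have := le_max_left C 0
      linarith
    have h2 : Tendsto (fun n : ℕ => Real.sqrt (2*Real.pi*((n:ℝ)+1))) atTop atTop :=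
      hsq.comp h1
    have h3 : Tendsto (fun n : ℕ => (Real.sqrt (2*Real.pi*((n:ℝ)+1)))⁻¹) atTop (nhds 0) :=
      h2.inv_tendsto_atTop
    have h4 := ENNReal.Tendsto.mul_const (b := ENNReal.ofReal (2*(k:ℝ)))
      (ENNReal.tendsto_ofReal h3) (Or.inr ENNReal.ofReal_ne_top)
    simpa using h4
  have : P Ac ≤ 0 :=
    le_of_tendsto_of_tendsto' tendsto_const_nhds htend hbound
  exact le_antisymm this zero_le

end prob
section truncLemmas

lemma trunc_eq_self {b y : ℝ} (h : |y| ≤ b) : trunc b y = y := by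
  rw [trunc, min_eq_right (abs_le.1 h).2, max_eq_right (abs_le.1 h).1]

lemma trunc_abs_le {b : ℝ} (hb : 0 ≤ b) (y : ℝ) : |trunc b y| ≤ b := by
  rw [abs_le]
  refine ⟨le_max_left _ _, max_le (by linarith) (min_le_left _ _)⟩

lemma trunc_sub_abs {b : ℝ} (hb : 0 ≤ b) (y : ℝ) : |y - trunc b y| ≤ |y| := by
  by_cases h1 : y ≤ b
  · by_cases h2 : -b ≤ y
    · rw [trunc_eq_self (abs_le.2 ⟨h2, h1⟩), sub_self, abs_zero]
      exact abs_nonneg y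
    · push_neg at h2
      have ht : trunc b y = -b := by
        rw [trunc, min_eq_right h1, max_eq_left h2.le]
      rw [ht, abs_of_nonpos (by linarith), abs_of_nonpos (by linarith)]
      linarith
  · push_neg at h1
    have ht : trunc b y = b := by
      rw [trunc, min_eq_left h1.le, max_eq_right (by linarith)]
    rw [ht, abs_of_nonneg (by linarith), abs_of_nonneg (by linarith)]
    linarith

lemma trunc_continuous (b : ℝ) : Continuous (trunc b) :=
  continuous_const.max (continuous_const.min continuous_id)

lemma sq_bound {b x y : ℝ} (hx : |x| ≤ b) (hy : |y| ≤ b) :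
    ENNReal.ofReal (2*(x - y)^2) ≤ ENNReal.ofReal (2*(2*b)^2) := by
  apply ENNReal.ofReal_le_ofReal
  obtain ⟨hx1, hx2⟩ := abs_le.1 hx
  obtain ⟨hy1, hy2⟩ := abs_le.1 hy
  nlinarith

lemma sq_bound2 {b : ℝ} (hb : 0 ≤ b) (y : ℝ) :
    ENNReal.ofReal (2*(y - trunc b y)^2) ≤ ENNReal.ofReal (2*y^2) := by
  apply ENNReal.ofReal_le_ofReal
  have h3 := trunc_sub_abs hb y
  nlinarith [mul_self_le_mul_self (abs_nonneg (y - trunc b y)) h3,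
    sq_abs (y - trunc b y), sq_abs y]

lemma ofReal_twosq_tendsto {d : ℕ → ℝ} (hd : Tendsto d atTop (nhds 0)) :
    Tendsto (fun i => ENNReal.ofReal (2*(d i)^2)) atTop (nhds 0) := by
  have h2 : Tendsto (fun i => 2*(d i)^2) atTop (nhds (2*(0:ℝ)^2)) :=
    tendsto_const_nhds.mul (hd.pow 2)
  have h3 : Tendsto (fun i => ENNReal.ofReal (2*(d i)^2)) atTop
      (nhds (ENNReal.ofReal (2*(0:ℝ)^2))) := ENNReal.tendsto_ofReal h2
  simpa using h3

lemma UB_of {w : ℝ → ℝ} (h2 : ∀ k : ℕ, ∃ q : ℚ, 0 ≤ (q:ℝ) ∧ (k:ℝ) < |w q|) :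
    ∀ c : ℝ, ∃ q : ℝ, 0 ≤ q ∧ c < |w q| := by
  intro c
  obtain ⟨q, h0, hq⟩ := h2 ⌈c⌉₊
  exact ⟨q, h0, lt_of_le_of_lt (Nat.le_ceil c) hq⟩

lemma NC_of {w : ℝ → ℝ}
    (h1 : ∀ q1 q2 : ℚ, 0 ≤ (q1:ℝ) → (q1:ℝ) < (q2:ℝ) → w q2 ≠ w q1) :
    ∀ a b : ℝ, 0 ≤ a → a < b → ∃ s, a < s ∧ s < b ∧ w s ≠ w a := by
  intro a b ha hab
  by_contra h
  push_neg at h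
  obtain ⟨q1, hq1a, hq1b⟩ := exists_rat_btwn hab
  obtain ⟨q2, hq2a, hq2b⟩ := exists_rat_btwn hq1b
  have e1 : w q1 = w a := h q1 hq1a (lt_trans hq2a hq2b)
  have e2 : w q2 = w a := h q2 (lt_trans hq1a hq2a) hq2b
  exact h1 q1 q2 (by linarith) hq2a (by rw [e1, e2])

end truncLemmas

section pathwise3
variable {w : ℝ → ℝ}
variable (hw : Continuous w) (hUB : ∀ c : ℝ, ∃ q : ℝ, 0 ≤ q ∧ c < |w q|)
  (hNC : ∀ a b : ℝ, 0 ≤ a → a < b → ∃ s, a < s ∧ s < b ∧ w s ≠ w a)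

include hw hUB in
lemma sampled_abs_le (yp : ℝ → ℝ) {t : ℝ} (ht : 0 < t) {b : ℝ} (hb : 0 ≤ b) (m : ℕ) :
    |sampled w (fun s => trunc b (yp s)) m t| ≤ b := by
  obtain ⟨r, hr1, hr2⟩ := skTime_locate hw hUB m ht
  rw [sampled_eq hw hUB _ ht hr1 hr2]
  exact trunc_abs_le hb _

include hw hUB hNC in
lemma sampled_tendsto_fixed (yp : ℝ → ℝ) {t : ℝ} (ht : 0 < t)
    (hyl : Tendsto yp (nhdsWithin t (Iio t)) (nhds (yp t))) (b : ℝ) :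
    Tendsto (fun m => sampled w (fun s => trunc b (yp s)) m t) atTop
      (nhds (trunc b (yp t))) := by
  choose r hr1 hr2 using fun m => skTime_locate hw hUB m ht
  have hs : ∀ m, sampled w (fun s => trunc b (yp s)) m t = trunc b (yp (skTime w m (r m))) :=
    fun m => sampled_eq hw hUB _ ht (hr1 m) (hr2 m)
  rw [tendsto_congr hs]
  have happ := skTime_left_approach hw hUB hNC ht r (fun m => ⟨hr1 m, hr2 m⟩)
  have hyc : Tendsto (fun m => yp (skTime w m (r m))) atTop (nhds (yp t)) := hyl.comp happ
  exact ((trunc_continuous b).continuousAt.tendsto).comp hyc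

include hw hUB hNC in
lemma sampled_tendsto_diag (yp : ℝ → ℝ) {t : ℝ} (ht : 0 < t)
    (hyl : Tendsto yp (nhdsWithin t (Iio t)) (nhds (yp t)))
    (msel : ℕ → ℕ) (hmsel : Tendsto msel atTop atTop) :
    Tendsto (fun k : ℕ => sampled w (fun s => trunc (k:ℝ) (yp s)) (msel k) t) atTop
      (nhds (yp t)) := by
  choose r hr1 hr2 using fun m => skTime_locate hw hUB m ht
  have hs : ∀ k : ℕ, sampled w (fun s => trunc (k:ℝ) (yp s)) (msel k) t
      = trunc (k:ℝ) (yp (skTime w (msel k) (r (msel k)))) :=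
    fun k => sampled_eq hw hUB _ ht (hr1 _) (hr2 _)
  rw [tendsto_congr hs]
  have happ := (skTime_left_approach hw hUB hNC ht r (fun m => ⟨hr1 m, hr2 m⟩)).comp hmsel
  have hyc : Tendsto (fun k => yp (skTime w (msel k) (r (msel k)))) atTop (nhds (yp t)) :=
    hyl.comp happ
  have hbd : ∀ᶠ k : ℕ in atTop, |yp (skTime w (msel k) (r (msel k)))| ≤ (k:ℝ) := by
    have hlt : ∀ᶠ k : ℕ in atTop, |yp (skTime w (msel k) (r (msel k)))| < |yp t| + 1 :=
      (hyc.abs).eventually_lt_const (lt_add_one _)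
    have hge : ∀ᶠ k : ℕ in atTop, |yp t| + 1 ≤ (k:ℝ) :=
      tendsto_natCast_atTop_atTop.eventually_ge_atTop _
    filter_upwards [hlt, hge] with k hk1 hk2
    linarith
  refine Tendsto.congr' ?_ hyc
  filter_upwards [hbd] with k hk
  exact (trunc_eq_self hk).symm

end pathwise3

/-- Approximation lemma: for a left-continuous adapted `Y` with
`‖Y‖²_K = ∫_0^K E[Y(t)²] dt < ∞` there is a sequence `m(b) → ∞` with
`‖Y - Y^b_{m(b)}‖_K → 0` as `b → ∞`, where `Y^b_m` samples the truncation `Y^b`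
at the Skorohod stopping times of step `2^{-m}`. -/
theorem approximation_by_sampled_truncations {Ω : Type} [MeasurableSpace Ω]
    (P : Measure Ω) [IsProbabilityMeasure P] (W : ℝ → Ω → ℝ) (hW : IsStandardBM P W)
    (K : ℝ) (hK : 0 < K) (Y : ℝ → Ω → ℝ)
    (hYadapted : Adapted (Filtration.natural W hW.1) Y)
    (hYleft : LeftContinuousPaths Y)
    (hYnorm : ∫⁻ t in Set.Ioc (0 : ℝ) K,
        ∫⁻ ω, ENNReal.ofReal ((Y t ω) ^ 2) ∂P < ⊤) :
    ∃ msel : ℕ → ℕ, Tendsto msel atTop atTop ∧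
      Tendsto (fun b : ℕ =>
          ∫⁻ t in Set.Ioc (0 : ℝ) K, ∫⁻ ω,
            ENNReal.ofReal ((Y t ω -
              sampled (fun s => W s ω) (fun s => trunc (b : ℝ) (Y s ω)) (msel b) t) ^ 2) ∂P)
        atTop (nhds 0) := by
  classical
  have hWcont : ∀ ω, Continuous fun t => W t ω := hW.2.2.1
  have hYmeas : ∀ t : ℝ, Measurable (Y t) :=
    fun t => (hYadapted t).mono ((Filtration.natural W hW.1).le t) le_rfl
  have hYjoint : Measurable fun p : ℝ × Ω => Y p.1 p.2 :=
    jointMeasurable_of_leftContinuous Y hYmeas (fun ω t => hYleft ω t)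
  -- the good event
  have h1 : ∀ᵐ ω ∂P, ∀ q1 q2 : ℚ, 0 ≤ (q1:ℝ) → (q1:ℝ) < (q2:ℝ) → W q2 ω ≠ W q1 ω := by
    rw [ae_all_iff]
    intro q1
    rw [ae_all_iff]
    intro q2
    by_cases h : 0 ≤ (q1:ℝ) ∧ (q1:ℝ) < (q2:ℝ)
    · filter_upwards [bm_increment_ne P W hW q1 q2 h.1 h.2] with ω hω
      exact fun _ _ => hω
    · filter_upwards with ω h0 hlt
      exact absurd ⟨h0, hlt⟩ h
  have h2 : ∀ᵐ ω ∂P, ∀ k : ℕ, ∃ q : ℚ, 0 ≤ (q:ℝ) ∧ (k:ℝ) < |W q ω| :=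
    ae_all_iff.2 (fun k => bm_unbounded P W hW k)
  have hG : ∀ᵐ ω ∂P, (∀ c : ℝ, ∃ q : ℝ, 0 ≤ q ∧ c < |W q ω|) ∧
      (∀ a b : ℝ, 0 ≤ a → a < b → ∃ s, a < s ∧ s < b ∧ W s ω ≠ W a ω) := by
    filter_upwards [h1, h2] with ω hω1 hω2
    exact ⟨UB_of hω2, NC_of (w := fun s => W s ω) hω1⟩
  -- Step 1: for fixed truncation level b, the sampled approximation converges in norm
  have hA : ∀ b : ℕ, Tendsto (fun m : ℕ => ∫⁻ t in Set.Ioc (0:ℝ) K, ∫⁻ ω,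
      ENNReal.ofReal (2*(trunc (b:ℝ) (Y t ω) -
        sampled (fun s => W s ω) (fun s => trunc (b:ℝ) (Y s ω)) m t)^2) ∂P)
      atTop (nhds 0) := by
    intro b
    refine lemmaM _ _ (fun _ => ENNReal.ofReal (2*(2*(b:ℝ))^2)) ?_ ?_ ?_
    · rw [lintegral_const, Measure.restrict_apply_univ, Real.volume_Ioc]
      exact ENNReal.mul_ne_top ENNReal.ofReal_ne_top ENNReal.ofReal_ne_top
    · intro m
      filter_upwards [ae_restrict_mem measurableSet_Ioc] with t ht
      calc (∫⁻ ω, ENNReal.ofReal (2*(trunc (b:ℝ) (Y t ω) -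
            sampled (fun s => W s ω) (fun s => trunc (b:ℝ) (Y s ω)) m t)^2) ∂P)
          ≤ ∫⁻ _, ENNReal.ofReal (2*(2*(b:ℝ))^2) ∂P := by
            refine lintegral_mono_ae ?_
            filter_upwards [hG] with ω hω
            exact sq_bound (trunc_abs_le (by positivity) _)
              (sampled_abs_le (hWcont ω) hω.1 _ ht.1 (by positivity) m)
        _ = _ := by rw [lintegral_const, measure_univ, mul_one]
    · filter_upwards [ae_restrict_mem measurableSet_Ioc] with t ht _
      refine lemmaM P _ (fun _ => ENNReal.ofReal (2*(2*(b:ℝ))^2)) ?_ ?_ ?_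
      · rw [lintegral_const, measure_univ, mul_one]
        exact ENNReal.ofReal_ne_top
      · intro m
        filter_upwards [hG] with ω hω
        exact sq_bound (trunc_abs_le (by positivity) _)
          (sampled_abs_le (hWcont ω) hω.1 _ ht.1 (by positivity) m)
      · filter_upwards [hG] with ω hω _
        have hkey := sampled_tendsto_fixed (hWcont ω) hω.1 hω.2 (fun s => Y s ω) ht.1
          (hYleft ω t) (b:ℝ)
        have hd : Tendsto (fun m => trunc (b:ℝ) (Y t ω) -
            sampled (fun s => W s ω) (fun s => trunc (b:ℝ) (Y s ω)) m t) atTop (nhds 0) := by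
          have := hkey.const_sub (trunc (b:ℝ) (Y t ω))
          simpa using this
        exact ofReal_twosq_tendsto hd
  -- choose the diagonal sequence
  have hex : ∀ b : ℕ, ∃ M : ℕ, ∀ m ≥ M, (∫⁻ t in Set.Ioc (0:ℝ) K, ∫⁻ ω,
      ENNReal.ofReal (2*(trunc (b:ℝ) (Y t ω) -
        sampled (fun s => W s ω) (fun s => trunc (b:ℝ) (Y s ω)) m t)^2) ∂P)
      < ((b:ℝ≥0∞)+1)⁻¹ := by
    intro b
    have hpos : (0:ℝ≥0∞) < ((b:ℝ≥0∞)+1)⁻¹ := by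
      refine ENNReal.inv_pos.2 ?_
      exact ENNReal.add_ne_top.2 ⟨ENNReal.natCast_ne_top b, ENNReal.one_ne_top⟩
    exact eventually_atTop.1 ((hA b).eventually_lt_const hpos)
  choose M hM using hex
  refine ⟨fun b => max b (M b), tendsto_atTop_mono (fun b => le_max_left _ _) tendsto_id, ?_⟩
  -- measurability helpers
  have hu_meas : ∀ (b : ℕ) (t : ℝ), Measurable fun ω =>
      ENNReal.ofReal (2*(Y t ω - trunc (b:ℝ) (Y t ω))^2) := by
    intro b t
    exact ((((hYmeas t).sub (((trunc_continuous ((b:ℝ))).measurable).comp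
      (hYmeas t))).pow_const 2).const_mul 2).ennreal_ofReal
  have hinner_meas : ∀ b : ℕ, Measurable fun p : ℝ × Ω =>
      ENNReal.ofReal (2*(Y p.1 p.2 - trunc (b:ℝ) (Y p.1 p.2))^2) := by
    intro b
    exact (((hYjoint.sub (((trunc_continuous ((b:ℝ))).measurable).comp
      hYjoint)).pow_const 2).const_mul 2).ennreal_ofReal
  have hα_meas : ∀ b : ℕ, Measurable fun t : ℝ =>
      ∫⁻ ω, ENNReal.ofReal (2*(Y t ω - trunc (b:ℝ) (Y t ω))^2) ∂P :=
    fun b => (hinner_meas b).lintegral_prod_right'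
  have hsq1_meas : Measurable fun p : ℝ × Ω => ENNReal.ofReal ((Y p.1 p.2)^2) :=
    ((hYjoint.pow_const 2)).ennreal_ofReal
  -- the dominating function for the truncation part
  have hDout_fin : (∫⁻ t in Set.Ioc (0:ℝ) K, ∫⁻ ω,
      ENNReal.ofReal (2*(Y t ω)^2) ∂P) ≠ ∞ := by
    have heq : ∀ t : ℝ, (∫⁻ ω, ENNReal.ofReal (2*(Y t ω)^2) ∂P)
        = 2 * ∫⁻ ω, ENNReal.ofReal ((Y t ω)^2) ∂P := by
      intro t
      rw [← lintegral_const_mul 2 ((hYmeas t).pow_const 2).ennreal_ofReal]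
      congr 1
      funext ω
      rw [ENNReal.ofReal_mul (by norm_num)]
      norm_num
    rw [lintegral_congr heq,
      lintegral_const_mul 2 hsq1_meas.lintegral_prod_right']
    exact ENNReal.mul_ne_top (by norm_num) hYnorm.ne
  -- Step 2: truncation error tends to 0
  have hU : Tendsto (fun b : ℕ => ∫⁻ t in Set.Ioc (0:ℝ) K, ∫⁻ ω,
      ENNReal.ofReal (2*(Y t ω - trunc (b:ℝ) (Y t ω))^2) ∂P) atTop (nhds 0) := by
    refine lemmaM _ _ (fun t => ∫⁻ ω, ENNReal.ofReal (2*(Y t ω)^2) ∂P) hDout_fin ?_ ?_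
    · intro b
      refine Eventually.of_forall (fun t => ?_)
      exact lintegral_mono (fun ω => sq_bound2 (by positivity) _)
    · refine Eventually.of_forall (fun t => ?_)
      intro hfin
      refine lemmaM P _ (fun ω => ENNReal.ofReal (2*(Y t ω)^2)) hfin ?_ ?_
      · intro b
        exact Eventually.of_forall (fun ω => sq_bound2 (by positivity) _)
      · refine Eventually.of_forall (fun ω _ => ?_)
        have hev : ∀ᶠ b : ℕ in atTop, |Y t ω| ≤ (b:ℝ) :=
          tendsto_natCast_atTop_atTop.eventually_ge_atTop _
        refine Tendsto.congr' ?_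
          (tendsto_const_nhds : Tendsto (fun _ : ℕ => (0:ℝ≥0∞)) atTop (nhds 0))
        filter_upwards [hev] with b hb
        rw [trunc_eq_self hb, sub_self]
        simp
  -- pointwise triangle-type bound and assembly
  have hfinal_le : ∀ b : ℕ, (∫⁻ t in Set.Ioc (0:ℝ) K, ∫⁻ ω,
      ENNReal.ofReal ((Y t ω - sampled (fun s => W s ω)
        (fun s => trunc (b:ℝ) (Y s ω)) (max b (M b)) t)^2) ∂P)
      ≤ (∫⁻ t in Set.Ioc (0:ℝ) K, ∫⁻ ω,
          ENNReal.ofReal (2*(Y t ω - trunc (b:ℝ) (Y t ω))^2) ∂P)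
        + (∫⁻ t in Set.Ioc (0:ℝ) K, ∫⁻ ω,
          ENNReal.ofReal (2*(trunc (b:ℝ) (Y t ω) - sampled (fun s => W s ω)
            (fun s => trunc (b:ℝ) (Y s ω)) (max b (M b)) t)^2) ∂P) := by
    intro b
    have hpt : ∀ (t : ℝ) (ω : Ω), ENNReal.ofReal ((Y t ω - sampled (fun s => W s ω)
        (fun s => trunc (b:ℝ) (Y s ω)) (max b (M b)) t)^2)
        ≤ ENNReal.ofReal (2*(Y t ω - trunc (b:ℝ) (Y t ω))^2)
          + ENNReal.ofReal (2*(trunc (b:ℝ) (Y t ω) - sampled (fun s => W s ω)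
            (fun s => trunc (b:ℝ) (Y s ω)) (max b (M b)) t)^2) := by
      intro t ω
      rw [← ENNReal.ofReal_add (by positivity) (by positivity)]
      apply ENNReal.ofReal_le_ofReal
      nlinarith [sq_nonneg (Y t ω - 2*trunc (b:ℝ) (Y t ω) + sampled (fun s => W s ω)
        (fun s => trunc (b:ℝ) (Y s ω)) (max b (M b)) t)]
    calc (∫⁻ t in Set.Ioc (0:ℝ) K, ∫⁻ ω,
        ENNReal.ofReal ((Y t ω - sampled (fun s => W s ω)
          (fun s => trunc (b:ℝ) (Y s ω)) (max b (M b)) t)^2) ∂P)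
        ≤ ∫⁻ t in Set.Ioc (0:ℝ) K, ∫⁻ ω,
            (ENNReal.ofReal (2*(Y t ω - trunc (b:ℝ) (Y t ω))^2)
              + ENNReal.ofReal (2*(trunc (b:ℝ) (Y t ω) - sampled (fun s => W s ω)
                (fun s => trunc (b:ℝ) (Y s ω)) (max b (M b)) t)^2)) ∂P :=
          lintegral_mono (fun t => lintegral_mono (fun ω => hpt t ω))
      _ = ∫⁻ t in Set.Ioc (0:ℝ) K,
            ((∫⁻ ω, ENNReal.ofReal (2*(Y t ω - trunc (b:ℝ) (Y t ω))^2) ∂P)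
              + (∫⁻ ω, ENNReal.ofReal (2*(trunc (b:ℝ) (Y t ω) - sampled (fun s => W s ω)
                (fun s => trunc (b:ℝ) (Y s ω)) (max b (M b)) t)^2) ∂P)) := by
          refine lintegral_congr (fun t => ?_)
          exact lintegral_add_left (hu_meas b t) _
      _ = _ := lintegral_add_left (hα_meas b) _
  -- the sampled part of the bound tends to 0 by the choice of M
  have hV : Tendsto (fun b : ℕ => ∫⁻ t in Set.Ioc (0:ℝ) K, ∫⁻ ω,
      ENNReal.ofReal (2*(trunc (b:ℝ) (Y t ω) - sampled (fun s => W s ω)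
        (fun s => trunc (b:ℝ) (Y s ω)) (max b (M b)) t)^2) ∂P) atTop (nhds 0) := by
    have hinv : Tendsto (fun b : ℕ => ((b:ℝ≥0∞)+1)⁻¹) atTop (nhds 0) := by
      have h := ENNReal.tendsto_inv_nat_nhds_zero.comp (tendsto_add_atTop_nat 1)
      have heq : (fun b : ℕ => ((b:ℝ≥0∞)+1)⁻¹)
          = (fun n : ℕ => ((n:ℝ≥0∞))⁻¹) ∘ (fun b => b + 1) := by
        funext b
        simp [Function.comp]
      rw [heq]
      exact h
    refine tendsto_of_tendsto_of_tendsto_of_le_of_le tendsto_const_nhds hinv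
      (fun b => zero_le) (fun b => (hM b _ (le_max_right _ _)).le)
  have hsum := hU.add hV
  refine tendsto_of_tendsto_of_tendsto_of_le_of_le tendsto_const_nhds
    (by simpa using hsum) (fun b => zero_le) hfinal_le
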